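/- For real s > 1, the Laplace transform of the function lie(x) = γ + log x + ∑_{k≥1} x^k/(k·k!) equals -log(s-1)/s, i.e. ∫_0^∞ lie(x) e^{-sx} dx = -(1/s)·log(s-1). -/

import Mathlib

open MeasureTheory Set Filter Real Topology

/-- `lie x = li (exp x)`, via its series representation. -/
noncomputable def lie (x : ℝ) : ℝ :=
  Real.eulerMascheroniConstant + Real.log x +
    ∑' k : ℕ, x ^ (k + 1) / ((k + 1 : ℕ) * (k + 1).factorial)

namespace LieAux

/-- Mellin machinery applied to `exp (-t)` at `s = 1`. -/
lemma mellin_aux :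
    MellinConvergent (fun t => Real.log t • (fun x : ℝ => ((Real.exp (-x) : ℝ) : ℂ)) t) 1 ∧
      HasDerivAt (mellin fun x : ℝ => ((Real.exp (-x) : ℝ) : ℂ))
        (mellin (fun t => Real.log t • (fun x : ℝ => ((Real.exp (-x) : ℝ) : ℂ)) t) 1) 1 := by
  refine mellin_hasDerivAt_of_isBigO_rpow (a := 2) (b := 0) ?_ ?_ (by norm_num) ?_ (by norm_num)
  · refine (Continuous.continuousOn ?_).locallyIntegrableOn measurableSet_Ioi
    exact Complex.continuous_ofReal.comp (Real.continuous_exp.comp continuous_neg)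
  · rw [← Asymptotics.isBigO_norm_left]
    simp_rw [Complex.norm_real,
      Asymptotics.isBigO_norm_left]
    simpa only [neg_one_mul] using (isLittleO_exp_neg_mul_rpow_atTop zero_lt_one _).isBigO
  · simp_rw [neg_zero, Real.rpow_zero]
    refine Asymptotics.isBigO_const_of_tendsto (?_ : Tendsto _ _ (𝓝 (1 : ℂ))) one_ne_zero
    rw [(by simp : (1 : ℂ) = Real.exp (-0))]
    exact (Complex.continuous_ofReal.comp
      (Real.continuous_exp.comp continuous_neg)).continuousWithinAt

lemma integrableOn_log_mul_exp :
    IntegrableOn (fun t : ℝ => Real.log t * Real.exp (-t)) (Ioi 0) := by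
  have h := mellin_aux.1
  rw [MellinConvergent] at h
  have h2 : IntegrableOn (fun t : ℝ => ((Real.log t * Real.exp (-t) : ℝ) : ℂ)) (Ioi 0) := by
    refine IntegrableOn.congr_fun h (fun t ht => ?_) measurableSet_Ioi
    show (t : ℂ) ^ ((1 : ℂ) - 1) • (Real.log t • ((Real.exp (-t) : ℝ) : ℂ)) = _
    rw [sub_self, Complex.cpow_zero, one_smul, Complex.real_smul, ← Complex.ofReal_mul]
  have h3 := h2.re
  refine IntegrableOn.congr_fun h3 (fun t ht => ?_) measurableSet_Ioi
  exact RCLike.ofReal_re _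

lemma integral_log_mul_exp :
    ∫ t in Ioi 0, Real.log t * Real.exp (-t) = -Real.eulerMascheroniConstant := by
  have h1 : HasDerivAt Complex.GammaIntegral
      (∫ t : ℝ in Ioi 0, (t : ℂ) ^ ((1 : ℂ) - 1) * (Real.log t * Real.exp (-t))) 1 :=
    Complex.hasDerivAt_GammaIntegral (by norm_num)
  have hI : (∫ t : ℝ in Ioi 0, (t : ℂ) ^ ((1 : ℂ) - 1) * (Real.log t * Real.exp (-t)))
      = ((∫ t in Ioi 0, Real.log t * Real.exp (-t) : ℝ) : ℂ) := by
    have h0 : (∫ t : ℝ in Ioi 0, (t : ℂ) ^ ((1 : ℂ) - 1) * (Real.log t * Real.exp (-t)))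
        = ∫ t in Ioi 0, ((Real.log t * Real.exp (-t) : ℝ) : ℂ) := by
      refine setIntegral_congr_fun measurableSet_Ioi fun t ht => ?_
      simp [Complex.ofReal_mul]
    rw [h0]
    exact integral_ofReal
  rw [hI] at h1
  have h2 : HasDerivAt Complex.Gamma
      ((∫ t in Ioi 0, Real.log t * Real.exp (-t) : ℝ) : ℂ) 1 := by
    refine h1.congr_of_eventuallyEq ?_
    have hmem : {z : ℂ | 0 < z.re} ∈ 𝓝 (1 : ℂ) := by
      refine (isOpen_lt continuous_const Complex.continuous_re).mem_nhds ?_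
      simp
    filter_upwards [hmem] with z hz using Complex.Gamma_eq_integral hz
  have h2' : HasDerivAt Complex.Gamma
      ((∫ t in Ioi 0, Real.log t * Real.exp (-t) : ℝ) : ℂ) ((1 : ℝ) : ℂ) := by
    simpa using h2
  have h3 := h2'.real_of_complex
  have h4 : (fun x : ℝ => (Complex.Gamma (x : ℂ)).re) = Real.Gamma := by
    ext x; rw [Complex.Gamma_ofReal, Complex.ofReal_re]
  rw [h4, Complex.ofReal_re] at h3
  exact h3.unique Real.hasDerivAt_Gamma_one

end LieAux

theorem stmt_9 (s : ℝ) (hs : 1 < s) :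
    ∫ x in Set.Ioi (0 : ℝ), lie x * Real.exp (-s * x) = -(1 / s) * Real.log (s - 1) := by
  have hs0 : (0 : ℝ) < s := lt_trans one_pos hs
  have hsne : s ≠ 0 := hs0.ne'
  have hrpos : (0 : ℝ) < s⁻¹ := inv_pos.mpr hs0
  have hrlt : s⁻¹ < 1 := by
    rw [inv_lt_one_iff₀]; right; exact hs
  have habs : |s⁻¹| < 1 := by rwa [abs_of_pos hrpos]
  -- basic integrals
  have hexp_int : IntegrableOn (fun x : ℝ => Real.exp (-(s * x))) (Ioi 0) := by
    simpa [neg_mul] using exp_neg_integrableOn_Ioi 0 hs0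
  have hexp_val : ∫ x in Ioi 0, Real.exp (-(s * x)) = 1 / s := by
    have h := Real.integral_rpow_mul_exp_neg_mul_Ioi (a := 1) one_pos hs0
    simpa [Real.Gamma_one, Real.rpow_one] using h
  have hpow_int : ∀ n : ℕ, IntegrableOn (fun x : ℝ => x ^ n * Real.exp (-(s * x))) (Ioi 0) := by
    intro n
    have h := integrableOn_rpow_mul_exp_neg_mul_rpow (p := 1) (s := (n : ℝ)) (b := s)
      (lt_of_lt_of_le neg_one_lt_zero n.cast_nonneg) zero_lt_one hs0
    refine IntegrableOn.congr_fun h (fun x hx => ?_) measurableSet_Ioi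
    rw [Real.rpow_one, Real.rpow_natCast, neg_mul]
  have hpow_val : ∀ n : ℕ, ∫ x in Ioi 0, x ^ n * Real.exp (-(s * x))
      = (n.factorial : ℝ) / s ^ (n + 1) := by
    intro n
    have h := Real.integral_rpow_mul_exp_neg_mul_Ioi (a := (n : ℝ) + 1) (by positivity) hs0
    have h1 : ∀ x ∈ Ioi (0 : ℝ), x ^ ((n : ℝ) + 1 - 1) * Real.exp (-(s * x))
        = x ^ n * Real.exp (-(s * x)) := by
      intro x hx
      rw [add_sub_cancel_right, Real.rpow_natCast]
    rw [setIntegral_congr_fun measurableSet_Ioi h1] at h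
    rw [h, Real.Gamma_nat_eq_factorial]
    rw [show ((n : ℝ) + 1) = ((n + 1 : ℕ) : ℝ) by push_cast; ring, Real.rpow_natCast]
    rw [div_pow, one_pow]
    ring
  -- the log integral
  set g : ℝ → ℝ := fun t => Real.log t * Real.exp (-t) with hg_def
  have hg_int : IntegrableOn g (Ioi 0) := LieAux.integrableOn_log_mul_exp
  have hg_val : ∫ t in Ioi 0, g t = -Real.eulerMascheroniConstant := LieAux.integral_log_mul_exp
  have hcomp_int : IntegrableOn (fun x : ℝ => g (s * x)) (Ioi 0) := by
    refine (integrableOn_Ioi_comp_mul_left_iff g 0 hs0).2 ?_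
    rw [mul_zero]; exact hg_int
  have heqon : EqOn (fun x : ℝ => g (s * x) - Real.log s * Real.exp (-(s * x)))
      (fun x : ℝ => Real.log x * Real.exp (-(s * x))) (Ioi 0) := by
    intro x hx
    simp only [hg_def]
    rw [Real.log_mul hsne (ne_of_gt hx)]
    ring
  have hlog_int : IntegrableOn (fun x : ℝ => Real.log x * Real.exp (-(s * x))) (Ioi 0) :=
    IntegrableOn.congr_fun (hcomp_int.sub (hexp_int.const_mul (Real.log s))) heqon
      measurableSet_Ioi
  have hlog_val : ∫ x in Ioi 0, Real.log x * Real.exp (-(s * x))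
      = (-Real.eulerMascheroniConstant - Real.log s) / s := by
    rw [← setIntegral_congr_fun measurableSet_Ioi heqon]
    rw [integral_sub hcomp_int (hexp_int.const_mul (Real.log s))]
    rw [integral_const_mul, hexp_val]
    have hcomp_val : ∫ x in Ioi 0, g (s * x) = s⁻¹ * (-Real.eulerMascheroniConstant) := by
      rw [integral_comp_mul_left_Ioi g 0 hs0, mul_zero, hg_val, smul_eq_mul]
    rw [hcomp_val]
    field_simp
  -- the series part
  set c : ℕ → ℝ := fun k => (((k + 1 : ℕ) : ℝ) * ((k + 1).factorial : ℝ)) with hc_def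
  have hc_pos : ∀ k, 0 < c k := by
    intro k
    simp only [hc_def]
    positivity
  have hc_eq : ∀ k, c k = ((k : ℝ) + 1) * ((k + 1).factorial : ℝ) := by
    intro k; simp only [hc_def]; push_cast; ring
  set T : ℝ → ℝ := fun x => ∑' k : ℕ, x ^ (k + 1) / c k with hT_def
  set F : ℕ → ℝ → ℝ := fun k x => x ^ (k + 1) / c k * Real.exp (-(s * x)) with hF_def
  have hFint : ∀ k, Integrable (F k) (volume.restrict (Ioi 0)) := by
    intro k
    have : F k = fun x => (x ^ (k + 1) * Real.exp (-(s * x))) / c k := by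
      funext x; simp only [hF_def]; ring
    rw [this]
    exact (hpow_int (k + 1)).div_const _
  have hFval : ∀ k, ∫ x in Ioi 0, F k x = s⁻¹ * ((s⁻¹) ^ (k + 1) / ((k : ℝ) + 1)) := by
    intro k
    have h1 : F k = fun x => (x ^ (k + 1) * Real.exp (-(s * x))) / c k := by
      funext x; simp only [hF_def]; ring
    rw [h1, integral_div, hpow_val (k + 1), hc_eq k]
    have hfne : ((k + 1).factorial : ℝ) ≠ 0 := by positivity
    have hk1 : ((k : ℝ) + 1) ≠ 0 := by positivity
    field_simp
    ring_nf
    field_simp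
    rw [← mul_pow, mul_one_div_cancel hsne, one_pow]
  have hlogsum := Real.hasSum_pow_div_log_of_abs_lt_one habs
  have hFnorm : ∀ k, ∫ x in Ioi 0, ‖F k x‖ = s⁻¹ * ((s⁻¹) ^ (k + 1) / ((k : ℝ) + 1)) := by
    intro k
    rw [← hFval k]
    refine setIntegral_congr_fun measurableSet_Ioi fun x hx => ?_
    have hx0 : 0 < x := hx
    have hck := hc_pos k
    rw [Real.norm_eq_abs, abs_of_nonneg]
    simp only [hF_def]
    positivity
  have hFnormsum : Summable fun k => ∫ x in Ioi 0, ‖F k x‖ := by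
    simp_rw [hFnorm]
    exact hlogsum.summable.mul_left _
  have hswap : ∑' k, ∫ x in Ioi 0, F k x = ∫ x in Ioi 0, ∑' k, F k x :=
    integral_tsum_of_summable_integral_norm hFint hFnormsum
  -- pointwise facts about T
  have hTsummand_sum : ∀ x : ℝ, Summable fun k : ℕ => x ^ (k + 1) / c k := by
    intro x
    have hbig : Summable fun k : ℕ => |x| ^ (k + 1) / ((k + 1).factorial : ℝ) := by
      have := (Real.summable_pow_div_factorial |x|).comp_injective
        (add_left_injective 1)
      simpa [Function.comp_def] using this
    refine Summable.of_norm_bounded hbig fun k => ?_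
    rw [Real.norm_eq_abs, abs_div, abs_pow, abs_of_pos (hc_pos k)]
    refine div_le_div_of_nonneg_left (by positivity) (by positivity) ?_
    rw [hc_eq k]
    have hf1 : (0 : ℝ) < ((k + 1).factorial : ℝ) := by positivity
    have hk0 : (0 : ℝ) ≤ (k : ℝ) := Nat.cast_nonneg k
    nlinarith
  have hT_nonneg : ∀ x : ℝ, 0 < x → 0 ≤ T x := by
    intro x hx
    refine tsum_nonneg fun k => ?_
    have := hc_pos k
    positivity
  have hexp_tsum : ∀ x : ℝ, Real.exp x = ∑' n : ℕ, x ^ n / (n.factorial : ℝ) := by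
    intro x
    rw [Real.exp_eq_exp_ℝ, NormedSpace.exp_eq_tsum_div]
  have hT_le : ∀ x : ℝ, 0 < x → T x ≤ Real.exp x := by
    intro x hx
    have hsum1 : Summable fun k : ℕ => x ^ (k + 1) / ((k + 1).factorial : ℝ) := by
      have := (Real.summable_pow_div_factorial x).comp_injective (add_left_injective 1)
      simpa [Function.comp_def] using this
    have step1 : T x ≤ ∑' k : ℕ, x ^ (k + 1) / ((k + 1).factorial : ℝ) := by
      refine (hTsummand_sum x).tsum_le_tsum (fun k => ?_) hsum1
      refine div_le_div_of_nonneg_left (by positivity) (by positivity) ?_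
      rw [hc_eq k]
      have hf1 : (0 : ℝ) < ((k + 1).factorial : ℝ) := by positivity
      have hk0 : (0 : ℝ) ≤ (k : ℝ) := Nat.cast_nonneg k
      nlinarith
    have step2 : ∑' k : ℕ, x ^ (k + 1) / ((k + 1).factorial : ℝ)
        ≤ ∑' n : ℕ, x ^ n / (n.factorial : ℝ) := by
      refine hsum1.tsum_le_tsum_of_inj (fun k => k + 1) (add_left_injective 1)
        (fun n _ => by positivity) (fun k => le_rfl)
        (Real.summable_pow_div_factorial x)
    rw [hexp_tsum x]
    exact step1.trans step2
  -- integrability of the series term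
  have hT_meas : AEStronglyMeasurable T (volume.restrict (Ioi 0)) := by
    refine aestronglyMeasurable_of_tendsto_ae atTop
      (f := fun n (x : ℝ) => ∑ k ∈ Finset.range n, x ^ (k + 1) / c k) (fun n => ?_) ?_
    · refine Continuous.aestronglyMeasurable ?_
      exact continuous_finset_sum _ fun k _ => (continuous_pow (k + 1)).div_const _
    · exact Eventually.of_forall fun x => ((hTsummand_sum x).hasSum).tendsto_sum_nat
  have hTexp_meas : AEStronglyMeasurable (fun x => T x * Real.exp (-(s * x)))
      (volume.restrict (Ioi 0)) :=
    hT_meas.mul (Continuous.aestronglyMeasurable (by fun_prop))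
  have hbound_int : IntegrableOn (fun x : ℝ => Real.exp (-((s - 1) * x))) (Ioi 0) := by
    have h1 : (0 : ℝ) < s - 1 := by linarith
    have h := exp_neg_integrableOn_Ioi (a := 0) (b := s - 1) h1
    refine IntegrableOn.congr_fun h (fun x hx => ?_) measurableSet_Ioi
    rw [neg_mul]
  have hI3 : IntegrableOn (fun x => T x * Real.exp (-(s * x))) (Ioi 0) := by
    refine Integrable.mono' hbound_int hTexp_meas ?_
    refine (ae_restrict_iff' measurableSet_Ioi).2 (Eventually.of_forall fun x hx => ?_)
    have hx0 : (0:ℝ) < x := hx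
    rw [Real.norm_eq_abs, abs_of_nonneg (mul_nonneg (hT_nonneg x hx0) (Real.exp_pos _).le)]
    calc T x * Real.exp (-(s * x)) ≤ Real.exp x * Real.exp (-(s * x)) :=
          mul_le_mul_of_nonneg_right (hT_le x hx0) (Real.exp_pos _).le
      _ = Real.exp (-((s - 1) * x)) := by rw [← Real.exp_add]; ring_nf
  -- value of the series integral
  have hS_val : ∫ x in Ioi 0, T x * Real.exp (-(s * x))
      = s⁻¹ * (Real.log s - Real.log (s - 1)) := by
    have hfun : (fun x => T x * Real.exp (-(s * x))) = fun x => ∑' k, F k x := by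
      funext x
      simp only [hT_def, hF_def]
      exact (tsum_mul_right).symm
    rw [hfun, ← hswap]
    have heq2 : (fun k : ℕ => ∫ x in Ioi 0, F k x)
        = fun k : ℕ => s⁻¹ * ((s⁻¹) ^ (k + 1) / ((k : ℝ) + 1)) := by
      funext k; exact hFval k
    rw [heq2, tsum_mul_left, hlogsum.tsum_eq]
    have h1 : 1 - s⁻¹ = (s - 1) / s := by field_simp
    rw [h1, Real.log_div (by linarith : s - 1 ≠ 0) hsne]
    ring
  -- assemble
  have hsplit : EqOn (fun x => lie x * Real.exp (-s * x))
      (fun x => Real.eulerMascheroniConstant * Real.exp (-(s * x))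
        + Real.log x * Real.exp (-(s * x)) + T x * Real.exp (-(s * x))) (Ioi 0) := by
    intro x hx
    simp only [lie, hT_def, hc_def, neg_mul]
    ring
  rw [setIntegral_congr_fun measurableSet_Ioi hsplit]
  have hI12 : IntegrableOn (fun x : ℝ => Real.eulerMascheroniConstant * Real.exp (-(s * x))
      + Real.log x * Real.exp (-(s * x))) (Ioi 0) :=
    (hexp_int.const_mul _).add hlog_int
  rw [integral_add hI12 hI3, integral_add (hexp_int.const_mul _) hlog_int]
  rw [integral_const_mul, hexp_val, hlog_val, hS_val]
  field_simp
  ring
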